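/- Let X be a set, g : X → Bool a labeling function, (F, d) a metric space, and f : X → F a function such that for all x1, x2 in X, d(f(x1), f(x2)) = 0 if and only if g(x1) = g(x2). Let μ_i and μ_k be probability measures on a measurable space X with equal class priors, i.e., μ_i({x : g(x) = ℓ}) = μ_k({x : g(x) = ℓ}) for each label ℓ ∈ Bool. Then for every hypothesis h' : F → Bool (with the sets {x : h'(f(x)) = true} measurable for μ_i and μ_k), one has μ_i({x : h'(f(x)) = true}) = μ_k({x : h'(f(x)) = true}); consequently the H'-divergence sup over h' of |μ_i({x : h'(f(x)) = true}) − μ_k({x : h'(f(x)) = true})| equals 0. (Proposition 1: the label-preserving transformation f reduces the H-divergence between any pair of source domains on which it is learned to zero.) -/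
import Mathlib


open MeasureTheory

/-- Proposition 1: a label-preserving transformation `f` makes the measure of any
hypothesis-induced set agree across source domains with equal class priors; hence the
H'-divergence (sup over hypotheses of the absolute difference of probabilities) is zero. -/
theorem label_preserving_transformation_zero_H_divergence
    {X : Type*} [MeasurableSpace X] {F : Type*} [MetricSpace F]
    (g : X → Bool) (f : X → F)
    (hf : ∀ x1 x2 : X, dist (f x1) (f x2) = 0 ↔ g x1 = g x2)
    (μi μk : Measure X) [IsProbabilityMeasure μi] [IsProbabilityMeasure μk]
    (hprior : ∀ ℓ : Bool, μi {x | g x = ℓ} = μk {x | g x = ℓ}) :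
    (∀ h' : F → Bool, MeasurableSet {x | h' (f x) = true} →
        μi {x | h' (f x) = true} = μk {x | h' (f x) = true}) ∧
    (⨆ h' : {h' : F → Bool // MeasurableSet {x : X | h' (f x) = true}},
        |(μi {x | h'.1 (f x) = true}).toReal - (μk {x | h'.1 (f x) = true}).toReal|) = 0 := by
  have key : ∀ h' : F → Bool, μi {x | h' (f x) = true} = μk {x | h' (f x) = true} := by
    intro h'
    have hcongr : ∀ x1 x2, g x1 = g x2 → h' (f x1) = h' (f x2) := by
      intro x1 x2 h
      have hfe : f x1 = f x2 := dist_eq_zero.mp ((hf x1 x2).2 h)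
      rw [hfe]
    by_cases hT : ∃ x, g x = true ∧ h' (f x) = true
    · by_cases hF : ∃ x, g x = false ∧ h' (f x) = true
      · have hset : {x | h' (f x) = true} = Set.univ := by
          ext x
          simp only [Set.mem_univ, iff_true, Set.mem_setOf_eq]
          cases hgx : g x
          · obtain ⟨y, hy, hy'⟩ := hF
            rw [hcongr x y (by rw [hgx, hy])]; exact hy'
          · obtain ⟨y, hy, hy'⟩ := hT
            rw [hcongr x y (by rw [hgx, hy])]; exact hy'
        rw [hset]; simp
      · have hset : {x | h' (f x) = true} = {x | g x = true} := by
          ext x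
          simp only [Set.mem_setOf_eq]
          constructor
          · intro hx
            by_contra hgx
            simp only [Bool.not_eq_true] at hgx
            exact hF ⟨x, hgx, hx⟩
          · intro hgx
            obtain ⟨y, hy, hy'⟩ := hT
            rw [hcongr x y (by rw [hgx, hy])]; exact hy'
        rw [hset]; exact hprior true
    · by_cases hF : ∃ x, g x = false ∧ h' (f x) = true
      · have hset : {x | h' (f x) = true} = {x | g x = false} := by
          ext x
          simp only [Set.mem_setOf_eq]
          constructor
          · intro hx
            by_contra hgx
            simp only [Bool.not_eq_false] at hgx
            exact hT ⟨x, hgx, hx⟩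
          · intro hgx
            obtain ⟨y, hy, hy'⟩ := hF
            rw [hcongr x y (by rw [hgx, hy])]; exact hy'
        rw [hset]; exact hprior false
      · have hset : {x | h' (f x) = true} = (∅ : Set X) := by
          ext x
          simp only [Set.mem_setOf_eq, Set.mem_empty_iff_false, iff_false]
          intro hx
          cases hgx : g x
          · exact hF ⟨x, hgx, hx⟩
          · exact hT ⟨x, hgx, hx⟩
        rw [hset]; simp
  refine ⟨fun h' _ => key h', ?_⟩
  have hzero : ∀ h' : {h' : F → Bool // MeasurableSet {x : X | h' (f x) = true}},
      |(μi {x | h'.1 (f x) = true}).toReal - (μk {x | h'.1 (f x) = true}).toReal| = 0 := by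
    intro h'
    rw [key h'.1]
    simp
  apply le_antisymm
  · exact Real.iSup_le (fun h' => le_of_eq (hzero h')) le_rfl
  · exact Real.iSup_nonneg (fun h' => abs_nonneg _)
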